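/- Let A ⊆ B(H) be a nondegenerately acting operator algebra with the complete reduction property, and let A·A′ denote the norm-closed algebra generated by products of elements of A and its commutant A′. Then Lat(A·A′) = Lat A ∩ Lat A′, and every closed A·A′-invariant subspace of H is complemented by an A·A′-invariant subspace. -/

import Mathlib

set_option maxHeartbeats 1000000
set_option linter.unusedSectionVars false
set_option linter.unusedVariables false
open scoped ENNReal


variable {H : Type*} [NormedAddCommGroup H] [InnerProductSpace ℂ H] [CompleteSpace H]

/-- The norm-closed algebra generated by products `a · t` with `a ∈ A` and `t` in the
commutant `A′` of `A`. -/
noncomputable def productAlgebra (A : Subalgebra ℂ (H →L[ℂ] H)) : Subalgebra ℂ (H →L[ℂ] H) :=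
  (Algebra.adjoin ℂ
    {x : H →L[ℂ] H | ∃ a ∈ A, ∃ t : H →L[ℂ] H, (∀ b ∈ A, Commute t b) ∧ x = a * t}).topologicalClosure

noncomputable section

abbrev L2 (H : Type*) [NormedAddCommGroup H] [InnerProductSpace ℂ H] := lp (fun _ : ℕ => H) 2

lemma two_toReal_pos : 0 < (2 : ℝ≥0∞).toReal := by norm_num

/-- evaluation at a coordinate, as a continuous linear map -/
def evalCLM (i : ℕ) : L2 H →L[ℂ] H :=
  LinearMap.mkContinuous
    { toFun := fun ξ => ξ i
      map_add' := fun ξ ζ => by simp [lp.coeFn_add]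
      map_smul' := fun c ξ => by simp [lp.coeFn_smul] }
    1 (fun ξ => by
      show ‖ξ i‖ ≤ 1 * ‖ξ‖
      simpa using lp.norm_apply_le_norm (by norm_num : (2:ℝ≥0∞) ≠ 0) ξ i)

@[simp] lemma evalCLM_apply (i : ℕ) (ξ : L2 H) : evalCLM i ξ = ξ i := rfl

/-- coordinate inclusion, as a continuous linear map -/
def singleCLM (i : ℕ) : H →L[ℂ] L2 H :=
  LinearMap.mkContinuous
    { toFun := fun x => lp.single 2 i x
      map_add' := fun x y => by
        apply lp.ext; funext j
        by_cases h : j = i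
        · subst h; simp [lp.single_apply_self, lp.coeFn_add]
        · simp [lp.single_apply_ne _ _ _ h, lp.coeFn_add]
      map_smul' := fun c x => by simp [lp.single_smul] }
    1 (fun x => by
      simpa using le_of_eq (lp.norm_single two_toReal_pos (fun _ : ℕ => x) i))

@[simp] lemma singleCLM_apply (i : ℕ) (x : H) : singleCLM i x = lp.single 2 i x := rfl

lemma memℓp_map (a : H →L[ℂ] H) (ξ : L2 H) : Memℓp (fun i => a (ξ i)) 2 := by
  apply memℓp_gen
  have h1 : Summable fun i => ‖a‖ ^ (2:ℝ≥0∞).toReal * ‖ξ i‖ ^ (2:ℝ≥0∞).toReal :=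
    ((lp.memℓp ξ).summable two_toReal_pos).mul_left _
  refine Summable.of_nonneg_of_le (fun i => ?_) (fun i => ?_) h1
  · positivity
  · have h2 : ‖a (ξ i)‖ ^ (2:ℝ≥0∞).toReal ≤ (‖a‖ * ‖ξ i‖) ^ (2:ℝ≥0∞).toReal :=
      Real.rpow_le_rpow (norm_nonneg _) (a.le_opNorm _) ENNReal.toReal_nonneg
    rwa [Real.mul_rpow (norm_nonneg _) (norm_nonneg _)] at h2

/-- mapped sequence as an element of ℓ² -/
def ampl (a : H →L[ℂ] H) (ξ : L2 H) : L2 H := ⟨fun i => a (ξ i), memℓp_map a ξ⟩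

@[simp] lemma ampl_apply (a : H →L[ℂ] H) (ξ : L2 H) (i : ℕ) : (ampl a ξ : ∀ _ : ℕ, H) i = a (ξ i) := rfl

/-- Compression lemma: from the complete reduction property, every closed invariant
subspace of ℓ²(H) has a bounded linear projection onto it that commutes with the
amplified action of `A`. -/
lemma compress (A : Subalgebra ℂ (H →L[ℂ] H))
    (hcrp : ∀ V : Submodule ℂ (lp (fun _ : ℕ => H) 2), IsClosed (V : Set (lp (fun _ : ℕ => H) 2)) →
      (∀ a ∈ A, ∀ ξ ∈ V, ∀ η : lp (fun _ : ℕ => H) 2, (∀ i, η i = a (ξ i)) → η ∈ V) →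
      ∃ W : Submodule ℂ (lp (fun _ : ℕ => H) 2), IsClosed (W : Set (lp (fun _ : ℕ => H) 2)) ∧
        (∀ a ∈ A, ∀ ξ ∈ W, ∀ η : lp (fun _ : ℕ => H) 2, (∀ i, η i = a (ξ i)) → η ∈ W) ∧
        V ⊓ W = ⊥ ∧ V ⊔ W = ⊤)
    (U : Submodule ℂ (L2 H)) (hUc : IsClosed (U : Set (L2 H)))
    (hUinv : ∀ a ∈ A, ∀ ξ ∈ U, ∀ η : L2 H, (∀ i, η i = a (ξ i)) → η ∈ U) :
    ∃ Q : L2 H →L[ℂ] L2 H, (∀ ξ, Q ξ ∈ U) ∧ (∀ u ∈ U, Q u = u) ∧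
      (∀ a ∈ A, ∀ ξ η : L2 H, (∀ i, η i = a (ξ i)) → ∀ i, (Q η) i = a ((Q ξ) i)) := by
  obtain ⟨W, hWc, hWinv, hinf, hsup⟩ := hcrp U hUc hUinv
  have hcompl : IsCompl U W := ⟨disjoint_iff.2 hinf, codisjoint_iff.2 hsup⟩
  set P := U.linearProjOfClosedCompl W hcompl hUc hWc with hP
  refine ⟨U.subtypeL.comp P, fun ξ => (P ξ).2, fun u hu => ?_, ?_⟩
  · show ((P u : U) : L2 H) = u
    rw [hP, Submodule.coe_continuous_linearProjOfClosedCompl']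
    exact congrArg _ (Submodule.linearProjOfIsCompl_apply_left hcompl ⟨u, hu⟩)
  · have hPleft : ∀ u ∈ U, ((P u : U) : L2 H) = u := by
      intro u hu
      rw [hP, Submodule.coe_continuous_linearProjOfClosedCompl']
      exact congrArg _ (Submodule.linearProjOfIsCompl_apply_left hcompl ⟨u, hu⟩)
    have hPright : ∀ w ∈ W, ((P w : U) : L2 H) = 0 := by
      intro w hw
      rw [hP, Submodule.coe_continuous_linearProjOfClosedCompl']
      rw [Submodule.linearProjOfIsCompl_apply_right hcompl ⟨w, hw⟩]
      rfl
    intro a ha ξ η hη i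
    obtain ⟨u, hu, w, hw, huw⟩ := Submodule.mem_sup.1 (hsup ▸ Submodule.mem_top (x := ξ))
    have hη' : η = ampl a u + ampl a w := by
      apply lp.ext; funext j
      have : (η : ∀ _ : ℕ, H) j = a (ξ j) := hη j
      rw [lp.coeFn_add]
      simp only [Pi.add_apply, ampl_apply, this, ← huw, lp.coeFn_add, Pi.add_apply, map_add]
    have hu' : ampl a u ∈ U := hUinv a ha u hu _ (fun _ => rfl)
    have hw' : ampl a w ∈ W := hWinv a ha w hw _ (fun _ => rfl)
    have hQη : U.subtypeL.comp P η = ampl a u := by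
      rw [hη', map_add]
      show ((P (ampl a u) : U) : L2 H) + ((P (ampl a w) : U) : L2 H) = _
      rw [hPleft _ hu', hPright _ hw', add_zero]
    have hQξ : U.subtypeL.comp P ξ = u := by
      rw [← huw, map_add]
      show ((P u : U) : L2 H) + ((P w : U) : L2 H) = _
      rw [hPleft _ hu, hPright _ hw, add_zero]
    rw [hQη, hQξ]
    rfl

/-- operators leaving a closed subspace invariant form a closed subalgebra -/
def invAlg (V : Submodule ℂ H) : Subalgebra ℂ (H →L[ℂ] H) where
  carrier := {c | ∀ x ∈ V, c x ∈ V}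
  mul_mem' := fun {c} {d} hc hd x hx => hc _ (hd _ hx)
  one_mem' := fun x hx => by simpa using hx
  add_mem' := fun {c} {d} hc hd x hx => by
    simpa using V.add_mem (hc x hx) (hd x hx)
  zero_mem' := fun x hx => by simpa using V.zero_mem
  algebraMap_mem' := fun r x hx => by
    have : (algebraMap ℂ (H →L[ℂ] H) r) x = r • x := by
      simp [Algebra.algebraMap_eq_smul_one]
    rw [this]; exact V.smul_mem r hx

lemma invAlg_isClosed (V : Submodule ℂ H) (hVc : IsClosed (V : Set H)) :
    IsClosed ((invAlg V : Subalgebra ℂ (H →L[ℂ] H)) : Set (H →L[ℂ] H)) := by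
  have : ((invAlg V : Subalgebra ℂ (H →L[ℂ] H)) : Set (H →L[ℂ] H)) =
      ⋂ x ∈ (V : Set H), {c : H →L[ℂ] H | c x ∈ V} := by
    ext c
    constructor
    · intro hc; simpa using fun x hx => hc x hx
    · intro hc; exact fun x hx => by simpa using Set.mem_iInter₂.1 hc x hx
  rw [this]
  refine isClosed_biInter fun x hx => ?_
  exact hVc.preimage (ContinuousLinearMap.apply ℂ H x).continuous

lemma prod_inv_iff (A : Subalgebra ℂ (H →L[ℂ] H)) (V : Submodule ℂ H)
    (hVc : IsClosed (V : Set H)) :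
    (∀ c ∈ productAlgebra A, ∀ x ∈ V, c x ∈ V) ↔
      ((∀ a ∈ A, ∀ x ∈ V, a x ∈ V) ∧
       (∀ t : H →L[ℂ] H, (∀ b ∈ A, Commute t b) → ∀ x ∈ V, t x ∈ V)) := by
  constructor
  · intro h
    constructor
    · intro a ha x hx
      refine h a ?_ x hx
      refine Subalgebra.le_topologicalClosure _ (Algebra.subset_adjoin ?_)
      exact ⟨a, ha, 1, fun b hb => Commute.one_left b, (mul_one a).symm⟩
    · intro t ht x hx
      refine h t ?_ x hx
      refine Subalgebra.le_topologicalClosure _ (Algebra.subset_adjoin ?_)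
      exact ⟨1, one_mem A, t, ht, (one_mul t).symm⟩
  · rintro ⟨hA, hA'⟩
    have hle : productAlgebra A ≤ invAlg V := by
      refine Subalgebra.topologicalClosure_minimal ?_ (invAlg_isClosed V hVc)
      refine Algebra.adjoin_le ?_
      rintro x ⟨a, ha, t, ht, rfl⟩
      intro v hv
      have : (a * t) v = a (t v) := rfl
      rw [this]
      exact hA a ha _ (hA' t ht v hv)
    exact fun c hc => hle hc

lemma graph_norm_bound (D : H →L[ℂ] H) (Q : L2 H →L[ℂ] L2 H) (n : ℕ) (x : H)
    (hkey : (Q (lp.single 2 (2*n) x) : ∀ _ : ℕ, H) (2*n+1) = ((n:ℂ)) • D x) :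
    (n : ℝ) * ‖D x‖ ≤ ‖Q‖ * ‖x‖ := by
  have h1 : ‖(Q (lp.single 2 (2*n) x) : ∀ _ : ℕ, H) (2*n+1)‖ ≤ ‖Q (lp.single 2 (2*n) x)‖ :=
    lp.norm_apply_le_norm (by norm_num : (2:ℝ≥0∞) ≠ 0) _ _
  have h2 := Q.le_opNorm (lp.single 2 (2*n) x)
  have h3 : ‖(lp.single 2 (2*n) x : L2 H)‖ = ‖x‖ := by
    simpa using lp.norm_single two_toReal_pos (fun _ : ℕ => x) (2*n)
  have h4 : ‖(Q (lp.single 2 (2*n) x) : ∀ _ : ℕ, H) (2*n+1)‖ = (n : ℝ) * ‖D x‖ := by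
    rw [hkey, norm_smul]; simp
  rw [h3] at h2
  have h5 := h1.trans h2
  rw [h4] at h5
  exact h5

lemma D_eq_zero_of_bound (D : H →L[ℂ] H) (C : ℝ)
    (h : ∀ (n : ℕ) (x : H), (n : ℝ) * ‖D x‖ ≤ C * ‖x‖) : ∀ x, D x = 0 := by
  intro x
  by_contra hx0
  have hxpos : 0 < ‖D x‖ := norm_pos_iff.2 hx0
  obtain ⟨n, hn⟩ := exists_nat_gt (C * ‖x‖ / ‖D x‖)
  have := (div_lt_iff₀ hxpos).1 hn
  linarith [h n x]

lemma D_zero (A : Subalgebra ℂ (H →L[ℂ] H))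
    (hcrp : ∀ V : Submodule ℂ (lp (fun _ : ℕ => H) 2), IsClosed (V : Set (lp (fun _ : ℕ => H) 2)) →
      (∀ a ∈ A, ∀ ξ ∈ V, ∀ η : lp (fun _ : ℕ => H) 2, (∀ i, η i = a (ξ i)) → η ∈ V) →
      ∃ W : Submodule ℂ (lp (fun _ : ℕ => H) 2), IsClosed (W : Set (lp (fun _ : ℕ => H) 2)) ∧
        (∀ a ∈ A, ∀ ξ ∈ W, ∀ η : lp (fun _ : ℕ => H) 2, (∀ i, η i = a (ξ i)) → η ∈ W) ∧
        V ⊓ W = ⊥ ∧ V ⊔ W = ⊤)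
    (V : Submodule ℂ H)
    (hVA' : ∀ t : H →L[ℂ] H, (∀ b ∈ A, Commute t b) → ∀ x ∈ V, t x ∈ V)
    (D : H →L[ℂ] H)
    (hDc : ∀ a ∈ A, ∀ x, D (a x) = a (D x))
    (hDV : ∀ v ∈ V, D v = 0) (hDr : ∀ x, D x ∈ V) :
    ∀ x, D x = 0 := by
  set U : Submodule ℂ (L2 H) :=
    { carrier := {ξ | ∀ n : ℕ, (ξ : ∀ _ : ℕ, H) (2*n+1) = ((n : ℂ)) • D ((ξ : ∀ _ : ℕ, H) (2*n))}
      add_mem' := by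
        intro ξ ζ hξ hζ n
        rw [lp.coeFn_add, Pi.add_apply, Pi.add_apply, hξ n, hζ n, ← smul_add, ← map_add]
      zero_mem' := by intro n; simp [lp.coeFn_zero]
      smul_mem' := by
        intro c ξ hξ n
        rw [lp.coeFn_smul, Pi.smul_apply, Pi.smul_apply, hξ n, map_smul, smul_comm] } with hU
  have hUmem : ∀ ξ : L2 H, ξ ∈ U ↔
      ∀ n : ℕ, (ξ : ∀ _ : ℕ, H) (2*n+1) = ((n : ℂ)) • D ((ξ : ∀ _ : ℕ, H) (2*n)) :=
    fun ξ => Iff.rfl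
  have hUc : IsClosed (U : Set (L2 H)) := by
    have : (U : Set (L2 H)) =
        ⋂ n : ℕ, {ξ : L2 H | evalCLM (2*n+1) ξ = ((n : ℂ)) • D (evalCLM (2*n) ξ)} := by
      ext ξ; simp only [Set.mem_iInter, Set.mem_setOf_eq]; rfl
    rw [this]
    exact isClosed_iInter fun n => isClosed_eq (evalCLM (2*n+1)).continuous
      (((D.comp (evalCLM (2*n))).continuous).const_smul _)
  have hUinv : ∀ a ∈ A, ∀ ξ ∈ U, ∀ η : L2 H, (∀ i, η i = a (ξ i)) → η ∈ U := by
    intro a ha ξ hξ η hη n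
    rw [hη, hη, hξ n, map_smul, hDc a ha]
  obtain ⟨Q, hQmem, hQfix, hQcomm⟩ := compress A hcrp U hUc hUinv
  have key : ∀ (n : ℕ) (x : H),
      (Q (lp.single 2 (2*n) x) : ∀ _ : ℕ, H) (2*n+1) = ((n:ℂ)) • D x := by
    intro n x
    have hu2n : ((lp.single 2 (2*n) x + ((n:ℂ)) • lp.single 2 (2*n+1) (D x) : L2 H)
        : ∀ _ : ℕ, H) (2*n) = x := by
      rw [lp.coeFn_add, Pi.add_apply, lp.coeFn_smul, Pi.smul_apply,
        lp.single_apply_self, lp.single_apply_ne _ _ _ (by omega : 2*n ≠ 2*n+1)]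
      simp
    have hucoord : ∀ j, ((lp.single 2 (2*n) x + ((n:ℂ)) • lp.single 2 (2*n+1) (D x) : L2 H)
        : ∀ _ : ℕ, H) j
        = (lp.single 2 (2*n) x : ∀ _ : ℕ, H) j
          + ((n:ℂ)) • (lp.single 2 (2*n+1) (D x) : ∀ _ : ℕ, H) j := by
      intro j
      rw [lp.coeFn_add, Pi.add_apply, lp.coeFn_smul, Pi.smul_apply]
    have huU : (lp.single 2 (2*n) x + ((n:ℂ)) • lp.single 2 (2*n+1) (D x) : L2 H) ∈ U := by
      rw [hUmem]
      intro m
      by_cases hmn : m = n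
      · subst hmn
        rw [hu2n, hucoord,
          lp.single_apply_ne _ _ _ (by omega : 2*m+1 ≠ 2*m), lp.single_apply_self]
        simp
      · rw [hucoord, hucoord,
          lp.single_apply_ne _ _ _ (by omega : 2*m+1 ≠ 2*n),
          lp.single_apply_ne _ _ _ (by omega : 2*m+1 ≠ 2*n+1),
          lp.single_apply_ne _ _ _ (by omega : 2*m ≠ 2*n),
          lp.single_apply_ne _ _ _ (by omega : 2*m ≠ 2*n+1)]
        simp
    have hQu : Q (lp.single 2 (2*n) x) + ((n:ℂ)) • Q (lp.single 2 (2*n+1) (D x))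
        = lp.single 2 (2*n) x + ((n:ℂ)) • lp.single 2 (2*n+1) (D x) := by
      rw [← map_smul, ← map_add]
      exact hQfix _ huU
    have eq1 : x = (Q (lp.single 2 (2*n) x) : ∀ _ : ℕ, H) (2*n)
        + ((n:ℂ)) • (Q (lp.single 2 (2*n+1) (D x)) : ∀ _ : ℕ, H) (2*n) := by
      have := congrArg (fun ξ : L2 H => (ξ : ∀ _ : ℕ, H) (2*n)) hQu
      dsimp only at this
      rw [hu2n, lp.coeFn_add, Pi.add_apply, lp.coeFn_smul, Pi.smul_apply] at this
      exact this.symm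
    have hzV : D ((Q (lp.single 2 (2*n+1) (D x)) : ∀ _ : ℕ, H) (2*n)) = 0 := by
      have hrcomm : ∀ b ∈ A,
          Commute ((evalCLM (2*n)).comp (Q.comp (singleCLM (2*n+1)))) b := by
        intro b hb
        ext w
        show (Q (lp.single 2 (2*n+1) (b w)) : ∀ _ : ℕ, H) (2*n)
          = b ((Q (lp.single 2 (2*n+1) w) : ∀ _ : ℕ, H) (2*n))
        have hη : ∀ i, (lp.single 2 (2*n+1) (b w) : ∀ _ : ℕ, H) i
            = b ((lp.single 2 (2*n+1) w : ∀ _ : ℕ, H) i) := by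
          intro i
          by_cases hi : i = 2*n+1
          · subst hi; rw [lp.single_apply_self, lp.single_apply_self]
          · rw [lp.single_apply_ne _ _ _ hi, lp.single_apply_ne _ _ _ hi, map_zero]
        exact hQcomm b hb (lp.single 2 (2*n+1) w) (lp.single 2 (2*n+1) (b w)) hη (2*n)
      have hmemV : ((evalCLM (2*n)).comp (Q.comp (singleCLM (2*n+1)))) (D x) ∈ V :=
        hVA' _ hrcomm (D x) (hDr x)
      exact hDV _ hmemV
    have eq2 : D ((Q (lp.single 2 (2*n) x) : ∀ _ : ℕ, H) (2*n)) = D x := by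
      have := congrArg D eq1
      rw [map_add, map_smul, hzV, smul_zero, add_zero] at this
      exact this.symm
    have hyU := (hUmem _).1 (hQmem (lp.single 2 (2*n) x)) n
    rw [hyU, eq2]
  exact D_eq_zero_of_bound D ‖Q‖ (fun n x => graph_norm_bound D Q n x (key n x))

lemma proj_unique (A : Subalgebra ℂ (H →L[ℂ] H))
    (hcrp : ∀ V : Submodule ℂ (lp (fun _ : ℕ => H) 2), IsClosed (V : Set (lp (fun _ : ℕ => H) 2)) →
      (∀ a ∈ A, ∀ ξ ∈ V, ∀ η : lp (fun _ : ℕ => H) 2, (∀ i, η i = a (ξ i)) → η ∈ V) →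
      ∃ W : Submodule ℂ (lp (fun _ : ℕ => H) 2), IsClosed (W : Set (lp (fun _ : ℕ => H) 2)) ∧
        (∀ a ∈ A, ∀ ξ ∈ W, ∀ η : lp (fun _ : ℕ => H) 2, (∀ i, η i = a (ξ i)) → η ∈ W) ∧
        V ⊓ W = ⊥ ∧ V ⊔ W = ⊤)
    (V : Submodule ℂ H)
    (hVA' : ∀ t : H →L[ℂ] H, (∀ b ∈ A, Commute t b) → ∀ x ∈ V, t x ∈ V)
    (E F : H →L[ℂ] H)
    (hEr : ∀ x, E x ∈ V) (hEf : ∀ v ∈ V, E v = v) (hEc : ∀ a ∈ A, ∀ x, E (a x) = a (E x))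
    (hFr : ∀ x, F x ∈ V) (hFf : ∀ v ∈ V, F v = v) (hFc : ∀ a ∈ A, ∀ x, F (a x) = a (F x)) :
    E = F := by
  have hDc : ∀ a ∈ A, ∀ x, (E - F) (a x) = a ((E - F) x) := by
    intro a ha x
    have : (E - F) (a x) = E (a x) - F (a x) := rfl
    rw [this, hEc a ha, hFc a ha, ← map_sub]
    rfl
  have hDV : ∀ v ∈ V, (E - F) v = 0 := by
    intro v hv
    have : (E - F) v = E v - F v := rfl
    rw [this, hEf v hv, hFf v hv, sub_self]
  have hDr : ∀ x, (E - F) x ∈ V := fun x => V.sub_mem (hEr x) (hFr x)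
  have h0 := D_zero A hcrp V hVA' (E - F) hDc hDV hDr
  ext x
  have := h0 x
  have h1 : (E - F) x = E x - F x := rfl
  rw [h1] at this
  exact sub_eq_zero.1 this

lemma proj_exists (A : Subalgebra ℂ (H →L[ℂ] H))
    (hcrp : ∀ V : Submodule ℂ (lp (fun _ : ℕ => H) 2), IsClosed (V : Set (lp (fun _ : ℕ => H) 2)) →
      (∀ a ∈ A, ∀ ξ ∈ V, ∀ η : lp (fun _ : ℕ => H) 2, (∀ i, η i = a (ξ i)) → η ∈ V) →
      ∃ W : Submodule ℂ (lp (fun _ : ℕ => H) 2), IsClosed (W : Set (lp (fun _ : ℕ => H) 2)) ∧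
        (∀ a ∈ A, ∀ ξ ∈ W, ∀ η : lp (fun _ : ℕ => H) 2, (∀ i, η i = a (ξ i)) → η ∈ W) ∧
        V ⊓ W = ⊥ ∧ V ⊔ W = ⊤)
    (V : Submodule ℂ H) (hVc : IsClosed (V : Set H))
    (hVA : ∀ a ∈ A, ∀ x ∈ V, a x ∈ V) :
    ∃ E : H →L[ℂ] H, (∀ x, E x ∈ V) ∧ (∀ v ∈ V, E v = v) ∧
      (∀ a ∈ A, ∀ x, E (a x) = a (E x)) := by
  set U : Submodule ℂ (L2 H) :=
    { carrier := {ξ | (ξ : ∀ _ : ℕ, H) 0 ∈ V ∧ ∀ i : ℕ, i ≠ 0 → (ξ : ∀ _ : ℕ, H) i = 0}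
      add_mem' := by
        rintro ξ ζ ⟨hξ0, hξ⟩ ⟨hζ0, hζ⟩
        refine ⟨?_, fun i hi => ?_⟩
        · rw [lp.coeFn_add, Pi.add_apply]; exact V.add_mem hξ0 hζ0
        · rw [lp.coeFn_add, Pi.add_apply, hξ i hi, hζ i hi, add_zero]
      zero_mem' := by
        refine ⟨?_, fun i hi => ?_⟩ <;> simp [lp.coeFn_zero]
      smul_mem' := by
        rintro c ξ ⟨hξ0, hξ⟩
        refine ⟨?_, fun i hi => ?_⟩
        · rw [lp.coeFn_smul, Pi.smul_apply]; exact V.smul_mem c hξ0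
        · rw [lp.coeFn_smul, Pi.smul_apply, hξ i hi, smul_zero] } with hU
  have hUmem : ∀ ξ : L2 H, ξ ∈ U ↔
      ((ξ : ∀ _ : ℕ, H) 0 ∈ V ∧ ∀ i : ℕ, i ≠ 0 → (ξ : ∀ _ : ℕ, H) i = 0) := fun ξ => Iff.rfl
  have hUc : IsClosed (U : Set (L2 H)) := by
    have : (U : Set (L2 H)) =
        (evalCLM 0 ⁻¹' (V : Set H)) ∩ ⋂ i : ℕ, {ξ : L2 H | evalCLM (i+1) ξ = 0} := by
      ext ξ
      constructor
      · rintro ⟨h0, h⟩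
        exact ⟨h0, Set.mem_iInter.2 fun i => h (i+1) (Nat.succ_ne_zero i)⟩
      · rintro ⟨h0, h⟩
        refine ⟨h0, fun i hi => ?_⟩
        obtain ⟨j, rfl⟩ := Nat.exists_eq_succ_of_ne_zero hi
        exact Set.mem_iInter.1 h j
    rw [this]
    exact (hVc.preimage (evalCLM 0).continuous).inter
      (isClosed_iInter fun i => isClosed_eq (evalCLM (i+1)).continuous continuous_const)
  have hUinv : ∀ a ∈ A, ∀ ξ ∈ U, ∀ η : L2 H, (∀ i, η i = a (ξ i)) → η ∈ U := by
    rintro a ha ξ ⟨hξ0, hξ⟩ η hη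
    refine ⟨?_, fun i hi => ?_⟩
    · rw [hη]; exact hVA a ha _ hξ0
    · rw [hη, hξ i hi, map_zero]
  obtain ⟨Q, hQmem, hQfix, hQcomm⟩ := compress A hcrp U hUc hUinv
  refine ⟨(evalCLM 0).comp (Q.comp (singleCLM 0)), ?_, ?_, ?_⟩
  · intro x
    exact ((hUmem _).1 (hQmem (lp.single 2 0 x))).1
  · intro v hv
    have hmem : (lp.single 2 0 v : L2 H) ∈ U := by
      refine ⟨?_, fun i hi => ?_⟩
      · rw [lp.single_apply_self]; exact hv
      · rw [lp.single_apply_ne _ _ _ hi]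
    have := congrArg (fun ξ : L2 H => (ξ : ∀ _ : ℕ, H) 0) (hQfix _ hmem)
    dsimp only at this
    show (Q (lp.single 2 0 v) : ∀ _ : ℕ, H) 0 = v
    rw [this, lp.single_apply_self]
  · intro a ha x
    have hη : ∀ i, (lp.single 2 0 (a x) : ∀ _ : ℕ, H) i
        = a ((lp.single 2 0 x : ∀ _ : ℕ, H) i) := by
      intro i
      by_cases hi : i = 0
      · subst hi; rw [lp.single_apply_self, lp.single_apply_self]
      · rw [lp.single_apply_ne _ _ _ hi, lp.single_apply_ne _ _ _ hi, map_zero]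
    exact hQcomm a ha (lp.single 2 0 x) (lp.single 2 0 (a x)) hη 0

/-- for a nondegenerately acting operator algebra `A ⊆ B(H)` with the
complete reduction property, `Lat (A·A′) = Lat A ∩ Lat A′`, and every closed
`A·A′`-invariant subspace is topologically complemented by an `A·A′`-invariant subspace. -/
theorem lat_productAlgebra_and_reduction
    (A : Subalgebra ℂ (H →L[ℂ] H))
    (hnondeg : (Submodule.span ℂ {x : H | ∃ a ∈ A, ∃ ξ : H, a ξ = x}).topologicalClosure = ⊤)
    (hcrp : ∀ V : Submodule ℂ (lp (fun _ : ℕ => H) 2), IsClosed (V : Set (lp (fun _ : ℕ => H) 2)) →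
      (∀ a ∈ A, ∀ ξ ∈ V, ∀ η : lp (fun _ : ℕ => H) 2, (∀ i, η i = a (ξ i)) → η ∈ V) →
      ∃ W : Submodule ℂ (lp (fun _ : ℕ => H) 2), IsClosed (W : Set (lp (fun _ : ℕ => H) 2)) ∧
        (∀ a ∈ A, ∀ ξ ∈ W, ∀ η : lp (fun _ : ℕ => H) 2, (∀ i, η i = a (ξ i)) → η ∈ W) ∧
        V ⊓ W = ⊥ ∧ V ⊔ W = ⊤) :
    (∀ V : Submodule ℂ H, IsClosed (V : Set H) →
      ((∀ c ∈ productAlgebra A, ∀ x ∈ V, c x ∈ V) ↔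
        ((∀ a ∈ A, ∀ x ∈ V, a x ∈ V) ∧
         (∀ t : H →L[ℂ] H, (∀ b ∈ A, Commute t b) → ∀ x ∈ V, t x ∈ V)))) ∧
    (∀ V : Submodule ℂ H, IsClosed (V : Set H) → (∀ c ∈ productAlgebra A, ∀ x ∈ V, c x ∈ V) →
      ∃ W : Submodule ℂ H, IsClosed (W : Set H) ∧ (∀ c ∈ productAlgebra A, ∀ x ∈ W, c x ∈ W) ∧
        V ⊓ W = ⊥ ∧ V ⊔ W = ⊤) := by
  refine ⟨fun V hVc => prod_inv_iff A V hVc, ?_⟩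
  intro V hVc hVinv
  obtain ⟨hVA, hVA'⟩ := (prod_inv_iff A V hVc).1 hVinv
  obtain ⟨E, hEr, hEf, hEc⟩ := proj_exists A hcrp V hVc hVA
  -- E also commutes with every operator commuting with A
  have hEcomm' : ∀ t : H →L[ℂ] H, (∀ b ∈ A, Commute t b) → ∀ x, E (t x) = t (E x) := by
    intro t ht
    have h1 : ∀ x, (E + E * t - t * E) x = E x + E (t x) - t (E x) := fun x => rfl
    have hE'r : ∀ x, (E + E * t - t * E) x ∈ V := by
      intro x
      rw [h1]
      exact V.sub_mem (V.add_mem (hEr x) (hEr (t x))) (hVA' t ht _ (hEr x))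
    have hE'f : ∀ v ∈ V, (E + E * t - t * E) v = v := by
      intro v hv
      rw [h1, hEf v hv, hEf (t v) (hVA' t ht v hv), add_sub_cancel_right]
    have hE'c : ∀ a ∈ A, ∀ x, (E + E * t - t * E) (a x) = a ((E + E * t - t * E) x) := by
      intro a ha x
      have hta : ∀ y, t (a y) = a (t y) := fun y =>
        congrFun (congrArg DFunLike.coe (ht a ha)) y
      rw [h1, h1, hEc a ha, hta, hEc a ha, hta, ← map_add, ← map_sub]
    have hEE := proj_unique A hcrp V hVA' (E + E * t - t * E) E hE'r hE'f hE'c hEr hEf hEc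
    intro x
    have hx : (E + E * t - t * E) x = E x := congrFun (congrArg DFunLike.coe hEE) x
    rw [h1] at hx
    have h2 : E x + (E (t x) - t (E x)) = E x + 0 := by
      rw [add_zero, ← add_sub_assoc]; exact hx
    exact sub_eq_zero.1 (add_left_cancel h2)
  -- the complement is the kernel of E
  have hkerc : IsClosed ((LinearMap.ker (E : H →ₗ[ℂ] H) : Submodule ℂ H) : Set H) :=
    ContinuousLinearMap.isClosed_ker E
  refine ⟨LinearMap.ker (E : H →ₗ[ℂ] H), hkerc, ?_, ?_, ?_⟩
  · refine (prod_inv_iff A (LinearMap.ker (E : H →ₗ[ℂ] H)) hkerc).2 ⟨?_, ?_⟩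
    · intro a ha x hx
      rw [LinearMap.mem_ker, ContinuousLinearMap.coe_coe] at hx ⊢
      rw [hEc a ha, hx, map_zero]
    · intro t ht x hx
      rw [LinearMap.mem_ker, ContinuousLinearMap.coe_coe] at hx ⊢
      rw [hEcomm' t ht, hx, map_zero]
  · rw [eq_bot_iff]
    rintro x ⟨hxV, hxK⟩
    rw [Submodule.mem_bot]
    have : E x = 0 := hxK
    rw [← hEf x hxV, this]
  · rw [eq_top_iff]
    intro x _
    have hxk : x - E x ∈ LinearMap.ker (E : H →ₗ[ℂ] H) := by
      rw [LinearMap.mem_ker, ContinuousLinearMap.coe_coe, map_sub, hEf (E x) (hEr x), sub_self]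
    have : x = E x + (x - E x) := by abel
    rw [this]
    exact Submodule.add_mem_sup (hEr x) hxk

end
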